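/- Let C, D ⊆ F_{q^m}^n be F_{q^m}-linear codes with D ⊆ C and such that for every d ∈ D, the coordinatewise q-th power d^q := (d_1^q, …, d_n^q) belongs to C. Then for every integer i ≥ 1: Tr(C ⋆ D^{q^i}) ⊆ Tr(C ⋆ C^{q^i}) ∩ Tr(C ⋆ C^{q^{i−1}}). -/
import Mathlib


open Module

/-- The Schur (componentwise) product over `R` of two `R`-submodules of a commutative
`R`-algebra: the `R`-span of the set of products. For codes in `K^n` (with the pointwise
ring structure) this is the usual Schur product `C ⋆ D`. -/
def schurProd (R : Type*) {A : Type*} [CommSemiring R] [CommSemiring A] [Algebra R A]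
    (C D : Submodule R A) : Submodule R A :=
  Submodule.span R {x : A | ∃ c ∈ C, ∃ d ∈ D, x = c * d}

/-- The code `C^r := {(c₁^r, …, c_n^r) : c ∈ C}` of coordinatewise `r`-th powers
(as the span of that set). -/
def powCode {K : Type*} [Field K] {n : ℕ} (C : Submodule K (Fin n → K)) (r : ℕ) :
    Submodule K (Fin n → K) :=
  Submodule.span K {x : Fin n → K | ∃ c ∈ C, x = fun j => c j ^ r}

/-- The trace code `Tr(C)` over `F_q` of an `F_{q^m}`-linear code `C`: the `F_q`-span of the
coordinatewise traces `Tr(c) = (Tr(c₁), …, Tr(c_n))`, where `Tr(x) = x + x^q + ⋯ + x^{q^{m-1}}`. -/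
def traceCode (q m : ℕ) (Fq : Type*) [Field Fq] {Fqm : Type*} [Field Fqm] [Algebra Fq Fqm]
    {n : ℕ} (C : Submodule Fqm (Fin n → Fqm)) : Submodule Fq (Fin n → Fqm) :=
  Submodule.span Fq
    {x : Fin n → Fqm | ∃ c ∈ C, x = fun j => ∑ i ∈ Finset.range m, c j ^ q ^ i}

/-- Let `C, D ⊆ F_{q^m}^n` be `F_{q^m}`-linear codes with `D ⊆ C` and such that for
every `d ∈ D` the coordinatewise `q`-th power `d^q` belongs to `C`. Then for every
integer `i ≥ 1`, `Tr(C ⋆ D^{q^i}) ⊆ Tr(C ⋆ C^{q^i}) ∩ Tr(C ⋆ C^{q^{i−1}})`. -/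
theorem stmt_9 (q m n : ℕ) (hm : 0 < m) (Fq Fqm : Type*) [Field Fq] [Field Fqm]
    [Fintype Fq] [Fintype Fqm] [Algebra Fq Fqm]
    (hq : Fintype.card Fq = q) (hqm : Fintype.card Fqm = q ^ m)
    (C D : Submodule Fqm (Fin n → Fqm)) (hDC : D ≤ C)
    (hDq : ∀ d ∈ D, (fun j => d j ^ q) ∈ C) :
    ∀ i : ℕ, 1 ≤ i →
      traceCode q m Fq (schurProd Fqm C (powCode D (q ^ i))) ≤
        traceCode q m Fq (schurProd Fqm C (powCode C (q ^ i))) ⊓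
          traceCode q m Fq (schurProd Fqm C (powCode C (q ^ (i - 1)))) := by
  have traceMono : ∀ (E E' : Submodule Fqm (Fin n → Fqm)), E ≤ E' →
      traceCode q m Fq E ≤ traceCode q m Fq E' := by
    intro E E' h
    apply Submodule.span_mono
    rintro x ⟨c, hc, rfl⟩
    exact ⟨c, h hc, rfl⟩
  have schurMono : ∀ (E E' : Submodule Fqm (Fin n → Fqm)), E ≤ E' →
      schurProd Fqm C E ≤ schurProd Fqm C E' := by
    intro E E' h
    apply Submodule.span_mono
    rintro x ⟨c, hc, d, hd, rfl⟩
    exact ⟨c, hc, d, h hd, rfl⟩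
  intro i hi
  refine le_inf ?_ ?_
  · refine traceMono _ _ (schurMono _ _ ?_)
    apply Submodule.span_mono
    rintro x ⟨d, hd, rfl⟩
    exact ⟨d, hDC hd, rfl⟩
  · refine traceMono _ _ (schurMono _ _ ?_)
    rw [powCode, Submodule.span_le]
    rintro x ⟨d, hd, rfl⟩
    apply Submodule.subset_span
    refine ⟨fun j => d j ^ q, hDq d hd, ?_⟩
    funext j
    rw [← pow_mul]
    congr 1
    rw [← pow_succ']
    congr 1
    omega
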